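/- Let A_h > A_ℓ > 0, φ > 0, c > 0, and 0 < p < 1. Then the function Π : [0,1] → ℝ defined by Π(q) := √(c·φ·(p + q(1−p))·(p·A_h + q(1−p)·A_ℓ)/2) + (1−p)(1−q)·√(c·φ·A_ℓ/2) is strictly increasing on [0,1]; consequently, for every q ∈ [0,1), Π(q) < √(c·φ·(p·A_h + (1−p)·A_ℓ)/2). -/

import Mathlib

private lemma key_aux (Ah Al φ c p s : ℝ) (hAl : 0 < Al) (hAh : Al < Ah) (hφ : 0 < φ)
    (hc : 0 < c) (hp0 : 0 < p) (hs : 0 ≤ s) :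
    Real.sqrt (c * φ * Al / 2) *
        Real.sqrt (c * φ * (p + s) * (p * Ah + s * Al) / 2)
      < c * φ / 2 * (p * (Ah + Al) / 2 + s * Al) := by
  have hr : 0 < c * φ / 2 * (p * (Ah + Al) / 2 + s * Al) := by
    have h1 : 0 < p * (Ah + Al) / 2 + s * Al := by nlinarith
    positivity
  have h1 : (0:ℝ) ≤ c * φ * Al / 2 := by positivity
  rw [← Real.sqrt_mul h1]
  apply (Real.sqrt_lt' hr).mpr
  have hq : 0 < (c * φ / 2) ^ 2 * (p ^ 2 * (Ah - Al) ^ 2) := by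
    have : 0 < Ah - Al := by linarith
    positivity
  nlinarith [hq]

private lemma step_aux (Ah Al φ c p s1 s2 : ℝ) (hAl : 0 < Al) (hAh : Al < Ah) (hφ : 0 < φ)
    (hc : 0 < c) (hp0 : 0 < p) (hs1 : 0 ≤ s1) (hs12 : s1 < s2) :
    Real.sqrt (c * φ * (p + s1) * (p * Ah + s1 * Al) / 2)
      + (s2 - s1) * Real.sqrt (c * φ * Al / 2)
      < Real.sqrt (c * φ * (p + s2) * (p * Ah + s2 * Al) / 2) := by
  have hs2 : 0 ≤ s2 := le_of_lt (lt_of_le_of_lt hs1 hs12)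
  have hG1 : 0 ≤ c * φ * (p + s1) * (p * Ah + s1 * Al) / 2 := by
    have h1 : 0 ≤ p + s1 := by linarith
    have h2 : 0 ≤ p * Ah + s1 * Al := by nlinarith
    positivity
  have hG2 : 0 < c * φ * (p + s2) * (p * Ah + s2 * Al) / 2 := by
    have h1 : 0 < p + s2 := by linarith
    have h2 : 0 < p * Ah + s2 * Al := by nlinarith
    positivity
  set u := Real.sqrt (c * φ * (p + s1) * (p * Ah + s1 * Al) / 2) with hu
  set v := Real.sqrt (c * φ * (p + s2) * (p * Ah + s2 * Al) / 2) with hv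
  set w := Real.sqrt (c * φ * Al / 2) with hw
  have hu0 : 0 ≤ u := Real.sqrt_nonneg _
  have hv0 : 0 < v := Real.sqrt_pos.mpr hG2
  have hu2 : u ^ 2 = c * φ * (p + s1) * (p * Ah + s1 * Al) / 2 := Real.sq_sqrt hG1
  have hv2 : v ^ 2 = c * φ * (p + s2) * (p * Ah + s2 * Al) / 2 := Real.sq_sqrt hG2.le
  have k1 := key_aux Ah Al φ c p s1 hAl hAh hφ hc hp0 hs1
  have k2 := key_aux Ah Al φ c p s2 hAl hAh hφ hc hp0 hs2
  rw [← hw, ← hu] at k1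
  rw [← hw, ← hv] at k2
  -- (v - u)*(v + u) = (s2 - s1) * M
  have hdiff : (v - u) * (v + u) =
      (s2 - s1) * (c * φ / 2 * (p * (Ah + Al) + (s1 + s2) * Al)) := by
    have : (v - u) * (v + u) = v ^ 2 - u ^ 2 := by ring
    rw [this, hu2, hv2]; ring
  have hsum : w * (v + u) < c * φ / 2 * (p * (Ah + Al) + (s1 + s2) * Al) := by
    nlinarith [k1, k2]
  have hpos : 0 < s2 - s1 := by linarith
  have hmul : (s2 - s1) * (w * (v + u)) < (v - u) * (v + u) := by
    rw [hdiff]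
    exact mul_lt_mul_of_pos_left hsum hpos
  have hvu : (s2 - s1) * w < v - u := by
    have huv : 0 < v + u := by linarith
    have := lt_of_mul_lt_mul_right (by nlinarith [hmul] : ((s2 - s1) * w) * (v + u) < (v - u) * (v + u)) huv.le
    exact this
  linarith

theorem stmt_10 (Ah Al φ c p : ℝ) (hAl : 0 < Al) (hAh : Al < Ah) (hφ : 0 < φ)
    (hc : 0 < c) (hp0 : 0 < p) (hp1 : p < 1)
    (Pi : ℝ → ℝ)
    (hPi : ∀ q, Pi q =
      Real.sqrt (c * φ * (p + q * (1 - p)) * (p * Ah + q * (1 - p) * Al) / 2)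
        + (1 - p) * (1 - q) * Real.sqrt (c * φ * Al / 2)) :
    StrictMonoOn Pi (Set.Icc (0 : ℝ) 1) ∧
    ∀ q ∈ Set.Ico (0 : ℝ) 1,
      Pi q < Real.sqrt (c * φ * (p * Ah + (1 - p) * Al) / 2) := by
  have h1p : 0 < 1 - p := by linarith
  have mono : StrictMonoOn Pi (Set.Icc (0 : ℝ) 1) := by
    intro x hx y hy hxy
    rw [hPi x, hPi y]
    have hs1 : 0 ≤ x * (1 - p) := mul_nonneg hx.1 h1p.le
    have hs12 : x * (1 - p) < y * (1 - p) := by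
      exact mul_lt_mul_of_pos_right hxy h1p
    have hstep := step_aux Ah Al φ c p (x * (1 - p)) (y * (1 - p))
      hAl hAh hφ hc hp0 hs1 hs12
    have hring : (1 - p) * (1 - x) * Real.sqrt (c * φ * Al / 2)
        = (1 - p) * (1 - y) * Real.sqrt (c * φ * Al / 2)
          + (y * (1 - p) - x * (1 - p)) * Real.sqrt (c * φ * Al / 2) := by ring
    linarith
  refine ⟨mono, fun q hq => ?_⟩
  have h1mem : (1:ℝ) ∈ Set.Icc (0:ℝ) 1 := by norm_num
  have hqe : Pi q < Pi 1 := mono ⟨hq.1, hq.2.le⟩ h1mem hq.2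
  have hPi1 : Pi 1 = Real.sqrt (c * φ * (p * Ah + (1 - p) * Al) / 2) := by
    rw [hPi 1]
    rw [show c * φ * (p + 1 * (1 - p)) * (p * Ah + 1 * (1 - p) * Al) / 2
        = c * φ * (p * Ah + (1 - p) * Al) / 2 from by ring]
    norm_num
  linarith [hqe, hPi1.symm.le]
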